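/- In the n×n square grid graph B_n with unit conductances, the effective resistance between corner (1,1) and corner (n,n) satisfies log(n)/2 ≤ R(a ↔ z) ≤ 2·log(n). -/

import Mathlib

open Finset

/-- `θ` is a unit flow from `s` to `t` on the graph `G`: it is antisymmetric,
supported on edges, has zero divergence away from `s` and `t`, and has strength 1. -/
def IsUnitFlow {V : Type*} [Fintype V] (G : SimpleGraph V) (s t : V)
    (θ : V → V → ℝ) : Prop :=
  (∀ x y, θ x y = - θ y x) ∧
  (∀ x y, ¬ G.Adj x y → θ x y = 0) ∧
  (∀ x, x ≠ s → x ≠ t → ∑ y, θ x y = 0) ∧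
  (∑ y, θ s y = 1)

/-- The energy of a flow `θ` with respect to edge resistances `r`:
`Σ_e θ(e)² r(e)` (each edge counted once, hence the factor `1/2` over ordered pairs). -/
noncomputable def energy {V : Type*} [Fintype V] (r : V → V → ℝ) (θ : V → V → ℝ) : ℝ :=
  (1 / 2) * ∑ x, ∑ y, θ x y ^ 2 * r x y

/-- The effective resistance between `s` and `t` (Thomson's principle): the infimum
of the energy over all unit flows from `s` to `t`. -/
noncomputable def effRes {V : Type*} [Fintype V] (G : SimpleGraph V)
    (r : V → V → ℝ) (s t : V) : ℝ :=
  sInf {E : ℝ | ∃ θ : V → V → ℝ, IsUnitFlow G s t θ ∧ E = energy r θ}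

/-- One-directional step relation for the square grid: vertices at unit Euclidean
distance. -/
def sqStep {n : ℕ} (a b : Fin n × Fin n) : Prop :=
  (a.1 = b.1 ∧ a.2.val + 1 = b.2.val) ∨ (a.2 = b.2 ∧ a.1.val + 1 = b.1.val)

/-- The `n × n` square grid graph `B_n` (vertices indexed by `Fin n × Fin n`,
corresponding to `{1,…,n}²`), adjacent at unit Euclidean distance. -/
def SqGrid (n : ℕ) : SimpleGraph (Fin n × Fin n) :=
  SimpleGraph.fromRel sqStep

noncomputable def vnum (n i j : ℕ) : ℝ :=
  if i + j + 2 ≤ n then ((j : ℝ) + 1) / (((i : ℝ) + j + 1) * ((i : ℝ) + j + 2))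
  else ((n : ℝ) - 1 - j) /
    ((2 * (n : ℝ) - 2 - (i + j)) * (2 * (n : ℝ) - 1 - (i + j)))

lemma vnum_lo (n i j : ℕ) (h : i + j + 2 ≤ n) :
    vnum n i j = ((j : ℝ) + 1) / (((i : ℝ) + j + 1) * ((i : ℝ) + j + 2)) := if_pos h

lemma vnum_hi (n i j : ℕ) (h : ¬ (i + j + 2 ≤ n)) :
    vnum n i j = ((n : ℝ) - 1 - j) /
      ((2 * (n : ℝ) - 2 - (i + j)) * (2 * (n : ℝ) - 1 - (i + j))) := if_neg h

lemma vnum_top (n i : ℕ) (hn : 1 ≤ n) : vnum n i (n - 1) = 0 := by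
  rw [vnum_hi n i (n-1) (by omega)]
  have : ((n - 1 : ℕ) : ℝ) = (n : ℝ) - 1 := by
    push_cast [Nat.cast_sub hn]; ring
  rw [this]; simp

/-- The divergence identity: outflow equals inflow at interior vertices. -/
lemma vnum_div (n i j : ℕ) (hn : 2 ≤ n) (hi : i ≤ n - 1) (hj : j ≤ n - 1)
    (hs : ¬ (i = 0 ∧ j = 0)) (ht : ¬ (i = n - 1 ∧ j = n - 1)) :
    vnum n i j + vnum n j i
      = vnum n i (if j = 0 then n - 1 else j - 1)
        + vnum n j (if i = 0 then n - 1 else i - 1) := by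
  have key : ∀ a b : ℕ, a ≤ n - 1 → b ≤ n - 1 → 1 ≤ a → b = 0 →
      vnum n a b + vnum n b a
        = vnum n a (if b = 0 then n - 1 else b - 1)
          + vnum n b (if a = 0 then n - 1 else a - 1) := by
    intro a b ha hb ha1 hb0
    have hiRa : (1:ℝ) ≤ (a:ℝ) := by exact_mod_cast ha1
    subst hb0
    rw [if_pos rfl, if_neg (by omega), vnum_top n a (by omega : 1 ≤ n)]
    have hc : ((a - 1 : ℕ) : ℝ) = (a : ℝ) - 1 := by
      push_cast [Nat.cast_sub ha1]; ring
    by_cases hcase : a + 2 ≤ n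
    · rw [vnum_lo n a 0 (by omega), vnum_lo n 0 a (by omega),
        vnum_lo n 0 (a-1) (by omega), hc]
      have h1 : (a : ℝ) + 1 ≠ 0 := by positivity
      have h2 : (a : ℝ) + 2 ≠ 0 := by positivity
      have h3 : (a : ℝ) ≠ 0 := by
        have : (1:ℝ) ≤ (a:ℝ) := by exact_mod_cast ha1
        linarith
      have h0 : (0:ℝ) < (a:ℝ) := by linarith [hiRa]
      have h4 : (a:ℝ) + (a:ℝ)^2 ≠ 0 := by nlinarith
      push_cast
      rw [zero_add]
      have r1 : (a:ℝ) + 0 + 1 = (a:ℝ) + 1 := by ring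
      have r2 : (a:ℝ) + 0 + 2 = (a:ℝ) + 2 := by ring
      have r3 : 0 + (a:ℝ) + 1 = (a:ℝ) + 1 := by ring
      have r4 : 0 + (a:ℝ) + 2 = (a:ℝ) + 2 := by ring
      have r5 : (a:ℝ) - 1 + 1 = (a:ℝ) := by ring
      have r6 : 0 + ((a:ℝ) - 1) + 1 = (a:ℝ) := by ring
      have r7 : 0 + ((a:ℝ) - 1) + 2 = (a:ℝ) + 1 := by ring
      rw [r1, r2, r3, r4, r5, r6, r7, ← add_div, zero_add,
        div_eq_div_iff (by positivity) (mul_ne_zero h3 h1)]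
      ring
    · -- a = n - 1
      have ha' : a = n - 1 := by omega
      have hcast : (a : ℝ) = (n : ℝ) - 1 := by
        rw [ha']; push_cast [Nat.cast_sub (by omega : 1 ≤ n)]; ring
      rw [vnum_hi n a 0 (by omega), vnum_hi n 0 a (by omega),
        vnum_lo n 0 (a-1) (by omega), hc, hcast]
      have h1 : (n : ℝ) - 1 ≠ 0 := by
        have : (2:ℝ) ≤ (n:ℝ) := by exact_mod_cast hn
        linarith
      have h2 : (n : ℝ) ≠ 0 := by positivity
      push_cast
      field_simp
      ring
  by_cases hj0 : j = 0
  · exact key i j hi hj (by omega) hj0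
  by_cases hi0 : i = 0
  · have := key j i hj hi (by omega) hi0
    linarith [this]
  -- now i ≥ 1, j ≥ 1
  rw [if_neg hj0, if_neg hi0]
  have hi1 : 1 ≤ i := by omega
  have hj1 : 1 ≤ j := by omega
  have hci : ((i - 1 : ℕ) : ℝ) = (i : ℝ) - 1 := by push_cast [Nat.cast_sub hi1]; ring
  have hcj : ((j - 1 : ℕ) : ℝ) = (j : ℝ) - 1 := by push_cast [Nat.cast_sub hj1]; ring
  have hiR : (1:ℝ) ≤ (i:ℝ) := by exact_mod_cast hi1
  have hjR : (1:ℝ) ≤ (j:ℝ) := by exact_mod_cast hj1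
  rcases lt_trichotomy (i + j + 2) (n + 1) with hcase | hcase | hcase
  · -- i + j + 2 ≤ n : all low
    have h1 : i + j + 2 ≤ n := by omega
    rw [vnum_lo n i j h1, vnum_lo n j i (by omega), vnum_lo n i (j-1) (by omega),
      vnum_lo n j (i-1) (by omega), hci, hcj]
    have d1 : (i : ℝ) + j ≠ 0 := by linarith
    have d2 : (i : ℝ) + j + 1 ≠ 0 := by linarith
    have d3 : (i : ℝ) + j + 2 ≠ 0 := by linarith
    have e1 : (i : ℝ) + ((j:ℝ) - 1) + 1 = (i:ℝ) + j := by ring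
    have e2 : (i : ℝ) + ((j:ℝ) - 1) + 2 = (i:ℝ) + j + 1 := by ring
    have e3 : (j : ℝ) + ((i:ℝ) - 1) + 1 = (j:ℝ) + i := by ring
    have e4 : (j : ℝ) + ((i:ℝ) - 1) + 2 = (j:ℝ) + i + 1 := by ring
    rw [e1, e2, e3, e4]
    have d1' : (j : ℝ) + i ≠ 0 := by linarith
    have d2' : (j : ℝ) + i + 1 ≠ 0 := by linarith
    field_simp
    ring
  · -- i + j = n - 1 : out high, in low
    have hk : (i : ℝ) + j = (n : ℝ) - 1 := by
      have : ((i + j : ℕ) : ℝ) = ((n - 1 : ℕ) : ℝ) := by exact_mod_cast (by omega : i + j = n - 1)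
      push_cast [Nat.cast_sub (by omega : 1 ≤ n)] at this; linarith
    rw [vnum_hi n i j (by omega), vnum_hi n j i (by omega), vnum_lo n i (j-1) (by omega),
      vnum_lo n j (i-1) (by omega), hci, hcj]
    have hnR : (2:ℝ) ≤ (n:ℝ) := by exact_mod_cast hn
    have d1 : (n : ℝ) - 1 ≠ 0 := by linarith
    have d2 : (n : ℝ) ≠ 0 := by linarith
    have e0 : (j : ℝ) + i = (n:ℝ) - 1 := by linarith
    rw [hk, e0]
    have e1 : (i : ℝ) + ((j:ℝ) - 1) + 1 = (n:ℝ) - 1 := by linarith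
    have e2 : (i : ℝ) + ((j:ℝ) - 1) + 2 = (n:ℝ) := by linarith
    have e3 : (j : ℝ) + ((i:ℝ) - 1) + 1 = (n:ℝ) - 1 := by linarith
    have e4 : (j : ℝ) + ((i:ℝ) - 1) + 2 = (n:ℝ) := by linarith
    rw [e1, e2, e3, e4]
    have f1 : 2 * (n:ℝ) - 2 - ((n:ℝ) - 1) = (n:ℝ) - 1 := by ring
    have f2 : 2 * (n:ℝ) - 1 - ((n:ℝ) - 1) = (n:ℝ) := by ring
    rw [f1, f2, ← add_div, ← add_div]
    have : ((n:ℝ) - 1 - j) + ((n:ℝ) - 1 - i) = ((j:ℝ) - 1 + 1) + ((i:ℝ) - 1 + 1) := by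
      linarith
    rw [this]
  · -- i + j ≥ n : all high
    have hub : i + j ≤ 2 * n - 3 := by omega
    have hkR : (i : ℝ) + j ≤ 2 * (n:ℝ) - 3 := by
      have : ((i + j : ℕ) : ℝ) ≤ ((2*n - 3 : ℕ) : ℝ) := by exact_mod_cast hub
      push_cast [Nat.cast_sub (by omega : 3 ≤ 2*n)] at this; linarith
    rw [vnum_hi n i j (by omega), vnum_hi n j i (by omega), vnum_hi n i (j-1) (by omega),
      vnum_hi n j (i-1) (by omega), hci, hcj]
    have d1 : 2 * (n:ℝ) - 2 - ((i:ℝ) + j) ≠ 0 := by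
      have : (1:ℝ) ≤ 2 * (n:ℝ) - 2 - ((i:ℝ) + j) := by linarith
      linarith
    have d2 : 2 * (n:ℝ) - 1 - ((i:ℝ) + j) ≠ 0 := by
      have : (1:ℝ) ≤ 2 * (n:ℝ) - 1 - ((i:ℝ) + j) := by linarith
      linarith
    have d3 : 2 * (n:ℝ) - ((i:ℝ) + j) ≠ 0 := by
      have : (1:ℝ) ≤ 2 * (n:ℝ) - ((i:ℝ) + j) := by linarith
      linarith
    have e1 : 2 * (n:ℝ) - 2 - ((i:ℝ) + ((j:ℝ)-1)) = 2 * (n:ℝ) - 1 - ((i:ℝ)+j) := by ring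
    have e2 : 2 * (n:ℝ) - 1 - ((i:ℝ) + ((j:ℝ)-1)) = 2 * (n:ℝ) - ((i:ℝ)+j) := by ring
    have e3 : 2 * (n:ℝ) - 2 - ((j:ℝ) + ((i:ℝ)-1)) = 2 * (n:ℝ) - 1 - ((i:ℝ)+j) := by ring
    have e4 : 2 * (n:ℝ) - 1 - ((j:ℝ) + ((i:ℝ)-1)) = 2 * (n:ℝ) - ((i:ℝ)+j) := by ring
    have e5 : (j:ℝ) + (i:ℝ) = (i:ℝ) + (j:ℝ) := by ring
    rw [e1, e2, e3, e4, e5]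
    rw [← add_div, ← add_div,
      div_eq_div_iff (mul_ne_zero d1 d2) (mul_ne_zero d2 d3)]
    ring

lemma vnum_nonneg (n i j : ℕ) (hj : j ≤ n - 1) (hn : 1 ≤ n) : 0 ≤ vnum n i j := by
  rw [vnum]
  split_ifs with h
  · positivity
  · have h1 : (j : ℝ) ≤ (n : ℝ) - 1 := by
      have : (j : ℝ) ≤ ((n - 1 : ℕ) : ℝ) := by exact_mod_cast hj
      rwa [Nat.cast_sub hn, Nat.cast_one] at this
    apply div_nonneg (by linarith)
    rcases le_or_gt (i + j) (2*n - 2) with h3 | h3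
    · have c1 : ((i:ℝ) + j) ≤ 2 * n - 2 := by
        have : ((i + j : ℕ) : ℝ) ≤ ((2*n - 2 : ℕ) : ℝ) := by exact_mod_cast h3
        push_cast [Nat.cast_sub (by omega : 2 ≤ 2*n)] at this; linarith
      nlinarith
    · have c1 : 2 * (n:ℝ) - 1 ≤ (i:ℝ) + j := by
        have : ((2*n - 1 : ℕ) : ℝ) ≤ ((i + j : ℕ) : ℝ) := by exact_mod_cast (by omega : 2*n-1 ≤ i+j)
        push_cast [Nat.cast_sub (by omega : 1 ≤ 2*n)] at this; linarith
      nlinarith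

/-- support: nonzero vnum means we can step up. -/
lemma vnum_ne_zero_step (n i j : ℕ) (hn : 1 ≤ n) (hj : j ≤ n - 1) (h : vnum n i j ≠ 0) :
    j + 1 ≤ n - 1 := by
  by_contra hc
  have hj' : j = n - 1 := by omega
  exact h (by rw [hj']; exact vnum_top n i hn)

section Flow

variable {n : ℕ}

def upv [NeZero n] (x : Fin n × Fin n) : Fin n × Fin n := (x.1, x.2 + 1)
def rtv [NeZero n] (x : Fin n × Fin n) : Fin n × Fin n := (x.1 + 1, x.2)

noncomputable def fl (n : ℕ) [NeZero n] (x y : Fin n × Fin n) : ℝ :=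
  (if y = upv x then vnum n x.1.val x.2.val else 0) +
  (if y = rtv x then vnum n x.2.val x.1.val else 0)

noncomputable def gflow (n : ℕ) [NeZero n] (x y : Fin n × Fin n) : ℝ :=
  fl n x y - fl n y x

lemma fin_add_one_val [NeZero n] (a : Fin n) (h : a.val + 1 < n) :
    (a + 1).val = a.val + 1 := by
  have h2 : 2 ≤ n := by omega
  rw [Fin.add_def, Fin.val_one' n, Nat.mod_eq_of_lt (by omega : 1 < n)]
  exact Nat.mod_eq_of_lt h

lemma fin_sub_one_val [NeZero n] (a : Fin n) (hn : 2 ≤ n) :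
    (a - 1).val = if a.val = 0 then n - 1 else a.val - 1 := by
  have hv : (a - 1 : Fin n).val = (n - (1 : Fin n).val + a.val) % n := by
    rw [Fin.sub_def]
  rw [Fin.val_one' n, Nat.mod_eq_of_lt (by omega : 1 < n)] at hv
  have hlt := a.isLt
  rw [hv]
  split_ifs with h
  · rw [h, Nat.add_zero]; exact Nat.mod_eq_of_lt (by omega)
  · have e : n - 1 + a.val = (a.val - 1) + n := by omega
    rw [e, Nat.add_mod_right]; exact Nat.mod_eq_of_lt (by omega)

lemma step_up [NeZero n] (x : Fin n × Fin n) (h : x.2.val + 1 ≤ n - 1) :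
    sqStep x (upv x) := by
  left
  refine ⟨rfl, ?_⟩
  rw [upv, fin_add_one_val x.2 (by omega)]

lemma step_rt [NeZero n] (x : Fin n × Fin n) (h : x.1.val + 1 ≤ n - 1) :
    sqStep x (rtv x) := by
  right
  refine ⟨rfl, ?_⟩
  rw [rtv, fin_add_one_val x.1 (by omega)]

lemma fl_eq_zero_of_not_step [NeZero n] (hn : 2 ≤ n) (x y : Fin n × Fin n)
    (h : ¬ sqStep x y) : fl n x y = 0 := by
  have hx2 : x.2.val ≤ n - 1 := by have := x.2.isLt; omega
  have hx1 : x.1.val ≤ n - 1 := by have := x.1.isLt; omega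
  rw [fl]
  have h1 : (if y = upv x then vnum n x.1.val x.2.val else 0) = 0 := by
    split_ifs with hy
    · by_contra hv
      exact h (hy ▸ step_up x (vnum_ne_zero_step n _ _ (by omega) hx2 hv))
    · rfl
  have h2 : (if y = rtv x then vnum n x.2.val x.1.val else 0) = 0 := by
    split_ifs with hy
    · by_contra hv
      exact h (hy ▸ step_rt x (vnum_ne_zero_step n _ _ (by omega) hx1 hv))
    · rfl
  rw [h1, h2, add_zero]

lemma sqStep_level {x y : Fin n × Fin n} (h : sqStep x y) :
    x.1.val + x.2.val + 1 = y.1.val + y.2.val := by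
  rcases h with ⟨h1, h2⟩ | ⟨h1, h2⟩
  · have h3 : x.1.val = y.1.val := congrArg Fin.val h1
    omega
  · have h3 : x.2.val = y.2.val := congrArg Fin.val h1
    omega

lemma fl_level [NeZero n] (hn : 2 ≤ n) {x y : Fin n × Fin n} (h : fl n x y ≠ 0) :
    x.1.val + x.2.val + 1 = y.1.val + y.2.val := by
  by_contra hc
  exact h (fl_eq_zero_of_not_step hn x y (fun hs => hc (sqStep_level hs)))

lemma sum_fl_out [NeZero n] (x : Fin n × Fin n) :
    ∑ y, fl n x y = vnum n x.1.val x.2.val + vnum n x.2.val x.1.val := by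
  simp [fl, Finset.sum_add_distrib]

end Flow

section Flow2

variable {n : ℕ}

lemma upv_eq_iff [NeZero n] (x y : Fin n × Fin n) :
    x = upv y ↔ y = (x.1, x.2 - 1) := by
  constructor
  · rintro rfl; simp [upv]
  · rintro rfl; simp [upv]

lemma rtv_eq_iff [NeZero n] (x y : Fin n × Fin n) :
    x = rtv y ↔ y = (x.1 - 1, x.2) := by
  constructor
  · rintro rfl; simp [rtv]
  · rintro rfl; simp [rtv]

lemma sum_fl_in [NeZero n] (x : Fin n × Fin n) :
    ∑ y, fl n y x
      = vnum n x.1.val ((x.2 - 1 : Fin n)).val + vnum n x.2.val ((x.1 - 1 : Fin n)).val := by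
  have h1 : ∀ y : Fin n × Fin n, fl n y x
      = (if y = (x.1, x.2 - 1) then vnum n x.1.val ((x.2 - 1 : Fin n)).val else 0)
        + (if y = (x.1 - 1, x.2) then vnum n x.2.val ((x.1 - 1 : Fin n)).val else 0) := by
    intro y
    rw [fl]
    congr 1
    · by_cases hy : y = (x.1, x.2 - 1)
      · rw [if_pos ((upv_eq_iff x y).mpr hy), if_pos hy, hy]
      · rw [if_neg (fun hc => hy ((upv_eq_iff x y).mp hc)), if_neg hy]
    · by_cases hy : y = (x.1 - 1, x.2)
      · rw [if_pos ((rtv_eq_iff x y).mpr hy), if_pos hy, hy]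
      · rw [if_neg (fun hc => hy ((rtv_eq_iff x y).mp hc)), if_neg hy]
  rw [Finset.sum_congr rfl (fun y _ => h1 y)]
  simp [Finset.sum_add_distrib]

lemma gflow_div [NeZero n] (hn : 2 ≤ n) (x : Fin n × Fin n)
    (hs : ¬ (x.1.val = 0 ∧ x.2.val = 0))
    (ht : ¬ (x.1.val = n - 1 ∧ x.2.val = n - 1)) :
    ∑ y, gflow n x y = 0 := by
  simp only [gflow]
  rw [Finset.sum_sub_distrib, sum_fl_out, sum_fl_in,
    fin_sub_one_val x.2 hn, fin_sub_one_val x.1 hn]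
  have h := vnum_div n x.1.val x.2.val hn
    (by have := x.1.isLt; omega) (by have := x.2.isLt; omega) hs ht
  linarith [h]

lemma gflow_strength [NeZero n] (hn : 2 ≤ n) (x : Fin n × Fin n)
    (hx1 : x.1.val = 0) (hx2 : x.2.val = 0) :
    ∑ y, gflow n x y = 1 := by
  simp only [gflow]
  rw [Finset.sum_sub_distrib, sum_fl_out, sum_fl_in,
    fin_sub_one_val x.2 hn, fin_sub_one_val x.1 hn, hx1, hx2]
  have hred : (if (0:ℕ) = 0 then n - 1 else 0 - 1) = n - 1 := if_pos rfl
  rw [hred, vnum_top n 0 (by omega), vnum_lo n 0 0 (by omega)]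
  norm_num

end Flow2

section Flow3

variable {n : ℕ}

lemma gflow_anti [NeZero n] (x y : Fin n × Fin n) : gflow n x y = - gflow n y x := by
  simp [gflow]

lemma gflow_not_adj [NeZero n] (hn : 2 ≤ n) (x y : Fin n × Fin n)
    (h : ¬ (SqGrid n).Adj x y) : gflow n x y = 0 := by
  rw [SqGrid, SimpleGraph.fromRel_adj] at h
  push_neg at h
  by_cases hxy : x = y
  · subst hxy
    simp [gflow]
  · have h2 := h hxy
    rw [gflow, fl_eq_zero_of_not_step hn x y (fun hs => h2.1 hs),
      fl_eq_zero_of_not_step hn y x (fun hs => h2.2 hs), sub_zero]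

lemma fl_mul_eq_zero [NeZero n] (hn : 2 ≤ n) (x y : Fin n × Fin n) :
    fl n x y * fl n y x = 0 := by
  by_cases h1 : fl n x y = 0
  · rw [h1, zero_mul]
  by_cases h2 : fl n y x = 0
  · rw [h2, mul_zero]
  have e1 := fl_level hn h1
  have e2 := fl_level hn h2
  omega

lemma upv_ne_rtv [NeZero n] (hn : 2 ≤ n) (x : Fin n × Fin n) : upv x ≠ rtv x := by
  intro h
  have h1 : x.1 = x.1 + 1 := congrArg Prod.fst h
  have h2 : (1 : Fin n) = 0 := by
    have := (left_eq_add).mp h1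
    exact this
  have h3 := congrArg Fin.val h2
  rw [Fin.val_one' n, Nat.mod_eq_of_lt (by omega : 1 < n), Fin.val_zero] at h3
  omega

lemma sum_fl_sq [NeZero n] (hn : 2 ≤ n) (x : Fin n × Fin n) :
    ∑ y, fl n x y ^ 2 = vnum n x.1.val x.2.val ^ 2 + vnum n x.2.val x.1.val ^ 2 := by
  have key : ∀ y, fl n x y ^ 2
      = (if y = upv x then vnum n x.1.val x.2.val ^ 2 else 0)
        + (if y = rtv x then vnum n x.2.val x.1.val ^ 2 else 0) := by
    intro y
    rw [fl]
    by_cases h1 : y = upv x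
    · rw [if_pos h1, if_pos h1, if_neg (h1 ▸ upv_ne_rtv hn x), if_neg (h1 ▸ upv_ne_rtv hn x)]
      ring
    · rw [if_neg h1, if_neg h1, zero_add, zero_add]
      by_cases h2 : y = rtv x
      · rw [if_pos h2, if_pos h2]
      · rw [if_neg h2, if_neg h2]
        norm_num
  rw [Finset.sum_congr rfl (fun y _ => key y)]
  simp [Finset.sum_add_distrib]

lemma energy_gflow [NeZero n] (hn : 2 ≤ n) :
    energy (fun _ _ => (1:ℝ)) (gflow n)
      = 2 * ∑ i ∈ Finset.range n, ∑ j ∈ Finset.range n, vnum n i j ^ 2 := by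
  rw [energy]
  have step1 : ∀ x y : Fin n × Fin n, gflow n x y ^ 2 * 1 = fl n x y ^ 2 + fl n y x ^ 2 := by
    intro x y
    have h := fl_mul_eq_zero hn x y
    rw [mul_one, gflow]
    linear_combination (-2 : ℝ) * h
  have step2 : ∑ x : Fin n × Fin n, ∑ y : Fin n × Fin n, (gflow n x y ^ 2 * 1)
      = 2 * ∑ x : Fin n × Fin n, ∑ y, fl n x y ^ 2 := by
    rw [Finset.sum_congr rfl (fun x _ => Finset.sum_congr rfl (fun y _ => step1 x y))]
    rw [Finset.sum_congr rfl (fun x _ => Finset.sum_add_distrib)]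
    rw [Finset.sum_add_distrib]
    rw [Finset.sum_comm (f := fun x y => fl n y x ^ 2)]
    ring
  rw [step2]
  have step3 : ∑ x : Fin n × Fin n, ∑ y, fl n x y ^ 2
      = 2 * ∑ i ∈ Finset.range n, ∑ j ∈ Finset.range n, vnum n i j ^ 2 := by
    rw [Finset.sum_congr rfl (fun x _ => sum_fl_sq hn x)]
    have hswap : ∑ x : Fin n × Fin n, vnum n x.2.val x.1.val ^ 2
        = ∑ x : Fin n × Fin n, vnum n x.1.val x.2.val ^ 2 := by
      exact Fintype.sum_equiv (Equiv.prodComm (Fin n) (Fin n))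
        (fun x => vnum n x.2.val x.1.val ^ 2) (fun x => vnum n x.1.val x.2.val ^ 2)
        (fun x => rfl)
    rw [Finset.sum_add_distrib, hswap]
    have hgrid : ∑ x : Fin n × Fin n, vnum n x.1.val x.2.val ^ 2
        = ∑ i ∈ Finset.range n, ∑ j ∈ Finset.range n, vnum n i j ^ 2 := by
      rw [Fintype.sum_prod_type]
      rw [Fin.sum_univ_eq_sum_range (fun i => ∑ b : Fin n, vnum n i b.val ^ 2) n]
      exact Finset.sum_congr rfl (fun i _ =>
        Fin.sum_univ_eq_sum_range (fun j => vnum n i j ^ 2) n)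
    rw [hgrid]
    ring
  rw [step3]
  ring

end Flow3

section SigmaBound

noncomputable def Hr (m : ℕ) : ℝ := ∑ i ∈ Finset.range m, ((i:ℝ)+1)⁻¹

lemma sum_sq1 (m : ℕ) :
    ∑ j ∈ Finset.range m, ((j:ℝ)+1)^2 = (m:ℝ)*((m:ℝ)+1)*(2*(m:ℝ)+1)/6 := by
  induction m with
  | zero => simp
  | succ m ih => rw [Finset.sum_range_succ, ih]; push_cast; ring

lemma sum_sq0 (m : ℕ) :
    ∑ j ∈ Finset.range m, ((j:ℝ))^2 = ((m:ℝ)-1)*(m:ℝ)*(2*(m:ℝ)-1)/6 := by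
  induction m with
  | zero => norm_num
  | succ m ih => rw [Finset.sum_range_succ, ih]; push_cast; ring

lemma Hr_succ_shift (n : ℕ) (hn : 1 ≤ n) :
    Hr n = (∑ i ∈ Finset.range (n-1), ((i:ℝ)+2)⁻¹) + 1 := by
  have h : Hr n = ∑ i ∈ Finset.range ((n-1)+1), ((i:ℝ)+1)⁻¹ := by
    rw [Hr, show (n-1)+1 = n by omega]
  rw [h, Finset.sum_range_succ']
  push_cast
  norm_num
  exact Finset.sum_congr rfl (fun i _ => by norm_num; ring_nf)

lemma inv_sum_shift (n : ℕ) (hn : 1 ≤ n) :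
    ∑ k ∈ Finset.range n, ((k:ℝ))⁻¹ = Hr (n-1) := by
  have h : ∑ k ∈ Finset.range n, ((k:ℝ))⁻¹ = ∑ k ∈ Finset.range ((n-1)+1), ((k:ℝ))⁻¹ := by
    rw [show (n-1)+1 = n by omega]
  rw [h, Finset.sum_range_succ']
  push_cast
  simp [Hr]

lemma fiber_lo (n k : ℕ) (hk : k + 2 ≤ n) :
    ∑ p ∈ Finset.HasAntidiagonal.antidiagonal k, vnum n p.1 p.2 ^ 2
      = (1/6) * (((k:ℝ)+1)⁻¹ + ((k:ℝ)+2)⁻¹) := by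
  have hterm : ∀ p ∈ Finset.HasAntidiagonal.antidiagonal k, vnum n p.1 p.2 ^2
      = (((p.2 : ℝ)+1)^2) * (((((k:ℝ)+1)*((k:ℝ)+2))^2)⁻¹) := by
    intro p hp
    have hpk : p.1 + p.2 = k := Finset.HasAntidiagonal.mem_antidiagonal.mp hp
    have e : (p.1:ℝ) + p.2 = (k:ℝ) := by exact_mod_cast hpk
    rw [vnum_lo n p.1 p.2 (by omega), e, div_pow, div_eq_mul_inv]
  rw [Finset.sum_congr rfl hterm, ← Finset.sum_mul]
  have hsum : ∑ p ∈ Finset.HasAntidiagonal.antidiagonal k, ((p.2:ℝ)+1)^2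
      = ∑ j ∈ Finset.range (k+1), ((j:ℝ)+1)^2 := by
    rw [Finset.Nat.sum_antidiagonal_eq_sum_range_succ (fun a b => ((b:ℝ)+1)^2) k,
      ← Finset.sum_range_reflect (fun j => ((j:ℝ)+1)^2) (k+1)]
    exact Finset.sum_congr rfl (fun i hi => by rw [show k+1-1-i = k-i by omega])
  rw [hsum, sum_sq1 (k+1)]
  have h1 : ((k:ℝ)+1) ≠ 0 := by positivity
  have h2 : ((k:ℝ)+2) ≠ 0 := by positivity
  push_cast
  field_simp
  ring

lemma fiber_hi (k : ℕ) :
    ∑ p ∈ Finset.HasAntidiagonal.antidiagonal k,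
        ((p.2:ℝ))^2 * (((((p.1:ℝ)+(p.2:ℝ))*((p.1:ℝ)+(p.2:ℝ)+1))^2)⁻¹)
      ≤ (1/6) * (((k:ℝ))⁻¹ + ((k:ℝ)+1)⁻¹) := by
  have hterm : ∀ p ∈ Finset.HasAntidiagonal.antidiagonal k,
      ((p.2:ℝ))^2 * (((((p.1:ℝ)+(p.2:ℝ))*((p.1:ℝ)+(p.2:ℝ)+1))^2)⁻¹)
        = ((p.2:ℝ))^2 * ((((k:ℝ)*((k:ℝ)+1))^2)⁻¹) := by
    intro p hp
    have hpk : p.1 + p.2 = k := Finset.HasAntidiagonal.mem_antidiagonal.mp hp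
    have e : (p.1:ℝ) + p.2 = (k:ℝ) := by exact_mod_cast hpk
    rw [e]
  rw [Finset.sum_congr rfl hterm, ← Finset.sum_mul]
  have hsum : ∑ p ∈ Finset.HasAntidiagonal.antidiagonal k, ((p.2:ℝ))^2
      = ∑ j ∈ Finset.range (k+1), ((j:ℝ))^2 := by
    rw [Finset.Nat.sum_antidiagonal_eq_sum_range_succ (fun a b => ((b:ℝ))^2) k,
      ← Finset.sum_range_reflect (fun j => ((j:ℝ))^2) (k+1)]
    exact Finset.sum_congr rfl (fun i hi => by rw [show k+1-1-i = k-i by omega])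
  rw [hsum, sum_sq0 (k+1)]
  by_cases hk : k = 0
  · subst hk; norm_num
  · have h1 : ((k:ℝ)) ≠ 0 := by
      have : (1:ℝ) ≤ (k:ℝ) := by exact_mod_cast (by omega : 1 ≤ k)
      linarith
    have h2 : ((k:ℝ)+1) ≠ 0 := by positivity
    apply le_of_eq
    push_cast
    field_simp
    ring
end SigmaBound

section SigmaMain

lemma antidiagonal_pairwise_disjoint (s : Finset ℕ) :
    (s : Set ℕ).PairwiseDisjoint Finset.HasAntidiagonal.antidiagonal := by
  intro a _ b _ hab
  rw [Function.onFun, Finset.disjoint_left]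
  intro p hpa hpb
  exact hab (by rw [← Finset.HasAntidiagonal.mem_antidiagonal.mp hpa, ← Finset.HasAntidiagonal.mem_antidiagonal.mp hpb])

lemma sigma_le (n : ℕ) (hn : 2 ≤ n) :
    ∑ i ∈ Finset.range n, ∑ j ∈ Finset.range n, vnum n i j ^ 2
      ≤ (1/6) * (2 * Hr (n-1) + 2 * Hr n - 1) := by
  rw [← Finset.sum_product' (s := Finset.range n) (t := Finset.range n)
    (f := fun i j => vnum n i j ^ 2)]
  rw [← Finset.sum_filter_add_sum_filter_not (Finset.range n ×ˢ Finset.range n)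
    (fun p => p.1 + p.2 + 2 ≤ n) (fun p => vnum n p.1 p.2 ^ 2)]
  have part1 : ∑ p ∈ (Finset.range n ×ˢ Finset.range n).filter (fun p => p.1 + p.2 + 2 ≤ n),
      vnum n p.1 p.2 ^ 2 = (1/6) * (Hr (n-1) + (Hr n - 1)) := by
    have hA : (Finset.range n ×ˢ Finset.range n).filter (fun p => p.1 + p.2 + 2 ≤ n)
        = (Finset.range (n-1)).biUnion Finset.HasAntidiagonal.antidiagonal := by
      ext p
      simp only [Finset.mem_filter, Finset.mem_product, Finset.mem_range,
        Finset.mem_biUnion, Finset.HasAntidiagonal.mem_antidiagonal]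
      constructor
      · rintro ⟨⟨h1, h2⟩, h3⟩; exact ⟨p.1 + p.2, by omega, rfl⟩
      · rintro ⟨k, hk, rfl⟩; omega
    rw [hA, Finset.sum_biUnion (antidiagonal_pairwise_disjoint _)]
    rw [Finset.sum_congr rfl (fun k hk =>
      fiber_lo n k (by have := Finset.mem_range.mp hk; omega))]
    rw [← Finset.mul_sum, Finset.sum_add_distrib]
    have e1 : ∑ k ∈ Finset.range (n-1), ((k:ℝ)+1)⁻¹ = Hr (n-1) := rfl
    have e2 : ∑ k ∈ Finset.range (n-1), ((k:ℝ)+2)⁻¹ = Hr n - 1 := by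
      have := Hr_succ_shift n (by omega); linarith
    rw [e1, e2]
  have part2 : ∑ p ∈ (Finset.range n ×ˢ Finset.range n).filter
      (fun p => ¬ (p.1 + p.2 + 2 ≤ n)), vnum n p.1 p.2 ^ 2
      ≤ (1/6) * (Hr (n-1) + Hr n) := by
    have hre : ∑ p ∈ (Finset.range n ×ˢ Finset.range n).filter
        (fun p => ¬ (p.1 + p.2 + 2 ≤ n)), vnum n p.1 p.2 ^ 2
        = ∑ p ∈ (Finset.range n ×ˢ Finset.range n).filter (fun p => p.1 + p.2 + 1 ≤ n),
            ((p.2:ℝ))^2 * (((((p.1:ℝ)+(p.2:ℝ))*((p.1:ℝ)+(p.2:ℝ)+1))^2)⁻¹) := by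
      apply Finset.sum_nbij' (i := fun p => (n-1-p.1, n-1-p.2))
        (j := fun p => (n-1-p.1, n-1-p.2))
      · intro p hp
        simp only [Finset.mem_filter, Finset.mem_product, Finset.mem_range] at *
        omega
      · intro p hp
        simp only [Finset.mem_filter, Finset.mem_product, Finset.mem_range] at *
        omega
      · intro p hp
        simp only [Finset.mem_filter, Finset.mem_product, Finset.mem_range] at hp
        have : n-1-(n-1-p.1) = p.1 := by omega
        have h2 : n-1-(n-1-p.2) = p.2 := by omega
        simp [this, h2]
      · intro p hp
        simp only [Finset.mem_filter, Finset.mem_product, Finset.mem_range] at hp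
        have : n-1-(n-1-p.1) = p.1 := by omega
        have h2 : n-1-(n-1-p.2) = p.2 := by omega
        simp [this, h2]
      · intro p hp
        simp only [Finset.mem_filter, Finset.mem_product, Finset.mem_range] at hp
        rw [vnum_hi n p.1 p.2 (by omega), div_pow, div_eq_mul_inv]
        have c1 : ((n-1-p.1 : ℕ):ℝ) = (n:ℝ) - 1 - p.1 := by
          push_cast [Nat.cast_sub (show p.1 ≤ n-1 by omega),
            Nat.cast_sub (show 1 ≤ n by omega)]; ring
        have c2 : ((n-1-p.2 : ℕ):ℝ) = (n:ℝ) - 1 - p.2 := by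
          push_cast [Nat.cast_sub (show p.2 ≤ n-1 by omega),
            Nat.cast_sub (show 1 ≤ n by omega)]; ring
        simp only [c1, c2]
        ring
    rw [hre]
    have hC : (Finset.range n ×ˢ Finset.range n).filter (fun p => p.1 + p.2 + 1 ≤ n)
        = (Finset.range n).biUnion Finset.HasAntidiagonal.antidiagonal := by
      ext p
      simp only [Finset.mem_filter, Finset.mem_product, Finset.mem_range,
        Finset.mem_biUnion, Finset.HasAntidiagonal.mem_antidiagonal]
      constructor
      · rintro ⟨⟨h1, h2⟩, h3⟩; exact ⟨p.1 + p.2, by omega, rfl⟩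
      · rintro ⟨k, hk, rfl⟩; omega
    rw [hC, Finset.sum_biUnion (antidiagonal_pairwise_disjoint _)]
    calc ∑ k ∈ Finset.range n, ∑ p ∈ Finset.HasAntidiagonal.antidiagonal k,
          ((p.2:ℝ))^2 * (((((p.1:ℝ)+(p.2:ℝ))*((p.1:ℝ)+(p.2:ℝ)+1))^2)⁻¹)
        ≤ ∑ k ∈ Finset.range n, (1/6) * (((k:ℝ))⁻¹ + ((k:ℝ)+1)⁻¹) :=
          Finset.sum_le_sum (fun k _ => fiber_hi k)
      _ = (1/6) * (Hr (n-1) + Hr n) := by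
          rw [← Finset.mul_sum, Finset.sum_add_distrib, inv_sum_shift n (by omega)]
          rfl
  linarith
end SigmaMain

section Lower

variable {n : ℕ}

def lv (x : Fin n × Fin n) : ℕ := x.1.val + x.2.val

lemma adj_level {x y : Fin n × Fin n} (h : (SqGrid n).Adj x y) :
    lv y = lv x + 1 ∨ lv x = lv y + 1 := by
  rw [SqGrid, SimpleGraph.fromRel_adj] at h
  rcases h.2 with hs | hs
  · left; exact (sqStep_level hs).symm
  · right; exact (sqStep_level hs).symm

lemma energy_lower (hn : 2 ≤ n) (s t : Fin n × Fin n)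
    (hs1 : s.1.val = 0) (hs2 : s.2.val = 0) (ht1 : t.1.val = n-1) (ht2 : t.2.val = n-1)
    (θ : (Fin n × Fin n) → (Fin n × Fin n) → ℝ)
    (hθ : IsUnitFlow (SqGrid n) s t θ) :
    Hr (n-1) / 2 ≤ energy (fun _ _ => (1:ℝ)) θ := by
  classical
  obtain ⟨hanti, hsupp, hdiv, hstr⟩ := hθ
  set A : ℕ → Finset (Fin n × Fin n) :=
    fun k => Finset.univ.filter (fun x => lv x ≤ k) with hA
  set D : ℕ → Finset ((Fin n × Fin n) × (Fin n × Fin n)) :=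
    fun k => ((A k) ×ˢ (A k)ᶜ).filter (fun p => θ p.1 p.2 ≠ 0) with hD
  -- the cut sum is 1
  have hcut : ∀ k, k < n - 1 → ∑ p ∈ D k, θ p.1 p.2 = 1 := by
    intro k hk
    have h1 : ∑ x ∈ A k, (∑ y, θ x y) = 1 := by
      rw [Finset.sum_eq_single_of_mem s
        (Finset.mem_filter.mpr ⟨Finset.mem_univ _, by show s.1.val + s.2.val ≤ k; omega⟩)
        (fun x hx hne => hdiv x hne (by
          intro hxt
          subst hxt
          simp only [hA, Finset.mem_filter] at hx
          have : lv x = 2*(n-1) := by rw [lv, ht1, ht2]; omega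
          omega))]
      exact hstr
    have h2 : ∑ x ∈ A k, ∑ y ∈ A k, θ x y = 0 := by
      have hS : ∑ x ∈ A k, ∑ y ∈ A k, θ x y
          = - ∑ x ∈ A k, ∑ y ∈ A k, θ x y := by
        nth_rewrite 1 [Finset.sum_congr rfl (fun x _ => Finset.sum_congr rfl
          (fun y _ => hanti x y))]
        rw [Finset.sum_comm]
        simp [Finset.sum_neg_distrib]
      linarith
    have h3 : ∑ x ∈ A k, ∑ y ∈ (A k)ᶜ, θ x y = 1 := by
      have h4 : ∀ x, (∑ y ∈ A k, θ x y) + ∑ y ∈ (A k)ᶜ, θ x y = ∑ y, θ x y :=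
        fun x => Finset.sum_add_sum_compl (A k) (θ x)
      have h5 : ∑ x ∈ A k, ((∑ y ∈ A k, θ x y) + ∑ y ∈ (A k)ᶜ, θ x y) = 1 := by
        rw [Finset.sum_congr rfl (fun x _ => h4 x)]; exact h1
      rw [Finset.sum_add_distrib] at h5
      linarith
    rw [hD]
    rw [Finset.sum_filter_ne_zero]
    rw [Finset.sum_product]
    exact h3
  -- membership facts
  have hDmem : ∀ k, k < n - 1 → ∀ p ∈ D k, lv p.1 = k ∧ lv p.2 = k + 1 ∧ sqStep p.1 p.2 := by
    intro k hk p hp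
    simp only [hD, Finset.mem_filter, Finset.mem_product, Finset.mem_compl] at hp
    obtain ⟨⟨hp1, hp2⟩, hp3⟩ := hp
    simp only [hA, Finset.mem_filter, Finset.mem_univ, true_and, not_le] at hp1 hp2
    have hadj : (SqGrid n).Adj p.1 p.2 := by
      by_contra hc
      exact hp3 (hsupp p.1 p.2 hc)
    have hlev := adj_level hadj
    have hl1 : lv p.1 = k := by omega
    have hl2 : lv p.2 = k + 1 := by omega
    refine ⟨hl1, hl2, ?_⟩
    rw [SqGrid, SimpleGraph.fromRel_adj] at hadj
    rcases hadj.2 with hs | hs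
    · exact hs
    · exfalso
      have hq := sqStep_level hs
      have e1 : lv p.1 = p.1.1.val + p.1.2.val := rfl
      have e2 : lv p.2 = p.2.1.val + p.2.2.val := rfl
      omega
  -- cardinality bound
  have hcard : ∀ k, k < n - 1 → (D k).card ≤ 2 * (k + 1) := by
    intro k hk
    have hinj : ∀ p ∈ D k, ∀ q ∈ D k,
        (p.1.1.val, decide (p.1.1 = p.2.1)) = (q.1.1.val, decide (q.1.1 = q.2.1)) → p = q := by
      intro p hp q hq heq
      obtain ⟨hp1, hp2, hp3⟩ := hDmem k hk p hp
      obtain ⟨hq1, hq2, hq3⟩ := hDmem k hk q hq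
      have e1 : p.1.1.val = q.1.1.val := congrArg Prod.fst heq
      have e2 : decide (p.1.1 = p.2.1) = decide (q.1.1 = q.2.1) := congrArg Prod.snd heq
      have hf1 : p.1.1 = q.1.1 := Fin.val_injective e1
      have hf2 : p.1.2 = q.1.2 := by
        apply Fin.val_injective
        rw [lv] at hp1 hq1
        omega
      have hfst : p.1 = q.1 := Prod.ext hf1 hf2
      rcases hp3 with ⟨hv1, hv2⟩ | ⟨hv1, hv2⟩
      · -- p vertical
        have hb : decide (p.1.1 = p.2.1) = true := by simp [hv1]
        rcases hq3 with ⟨hw1, hw2⟩ | ⟨hw1, hw2⟩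
        · -- q vertical too
          have hsnd : p.2 = q.2 := by
            apply Prod.ext
            · rw [← hv1, ← hw1, hf1]
            · apply Fin.val_injective
              have hpv : p.1.2.val = q.1.2.val := congrArg Fin.val hf2
              omega
          exact Prod.ext hfst hsnd
        · exfalso
          have hb2 : decide (q.1.1 = q.2.1) = false := by
            simp only [decide_eq_false_iff_not]
            intro hcc
            have := congrArg Fin.val hcc
            omega
          rw [hb, hb2] at e2
          exact absurd e2 (by simp)
      · -- p horizontal
        have hb : decide (p.1.1 = p.2.1) = false := by
          simp only [decide_eq_false_iff_not]
          intro hcc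
          have := congrArg Fin.val hcc
          omega
        rcases hq3 with ⟨hw1, hw2⟩ | ⟨hw1, hw2⟩
        · exfalso
          have hb2 : decide (q.1.1 = q.2.1) = true := by simp [hw1]
          rw [hb, hb2] at e2
          exact absurd e2 (by simp)
        · have hsnd : p.2 = q.2 := by
            apply Prod.ext
            · apply Fin.val_injective
              have hpv : p.1.1.val = q.1.1.val := e1
              omega
            · rw [← hv1, ← hw1, hf2]
          exact Prod.ext hfst hsnd
    have hmaps : ∀ p ∈ D k, (p.1.1.val, decide (p.1.1 = p.2.1))
        ∈ (Finset.range (k+1)) ×ˢ (Finset.univ : Finset Bool) := by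
      intro p hp
      obtain ⟨hp1, _, _⟩ := hDmem k hk p hp
      simp only [Finset.mem_product, Finset.mem_range, Finset.mem_univ, and_true]
      rw [lv] at hp1
      omega
    have := Finset.card_le_card_of_injOn
      (fun p => (p.1.1.val, decide (p.1.1 = p.2.1))) (fun p hp => hmaps p hp)
      (fun p hp q hq heq => hinj p hp q hq heq)
    rw [Finset.card_product, Finset.card_range, Finset.card_univ, Fintype.card_bool] at this
    omega
  -- Cauchy-Schwarz per cut
  have hCS : ∀ k, k < n - 1 → ((k:ℝ)+1)⁻¹ ≤ 2 * ∑ p ∈ D k, θ p.1 p.2 ^ 2 := by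
    intro k hk
    have hsq := sq_sum_le_card_mul_sum_sq (s := D k) (f := fun p => θ p.1 p.2)
    rw [hcut k hk] at hsq
    have hsum_nonneg : (0:ℝ) ≤ ∑ p ∈ D k, θ p.1 p.2 ^ 2 :=
      Finset.sum_nonneg (fun p _ => sq_nonneg _)
    have hcard' : ((D k).card : ℝ) ≤ 2*((k:ℝ)+1) := by
      have := hcard k hk
      exact_mod_cast (by exact_mod_cast this : ((D k).card : ℝ) ≤ ((2*(k+1) : ℕ) : ℝ))
    have h1 : (1:ℝ) ≤ 2*((k:ℝ)+1) * ∑ p ∈ D k, θ p.1 p.2 ^ 2 := by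
      have h2 : ((D k).card : ℝ) * ∑ p ∈ D k, θ p.1 p.2 ^ 2
          ≤ 2*((k:ℝ)+1) * ∑ p ∈ D k, θ p.1 p.2 ^ 2 :=
        mul_le_mul_of_nonneg_right hcard' hsum_nonneg
      calc (1:ℝ) = 1^2 := by norm_num
        _ ≤ ((D k).card : ℝ) * ∑ p ∈ D k, θ p.1 p.2 ^ 2 := by exact_mod_cast hsq
        _ ≤ _ := h2
    have hpos : (0:ℝ) < (k:ℝ) + 1 := by positivity
    rw [inv_le_iff_one_le_mul₀ hpos]
    nlinarith [h1]
  -- assemble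
  set U := (Finset.range (n-1)).biUnion (fun k => D k ∪ (D k).image Prod.swap) with hU
  have hDlev : ∀ k, k < n-1 → ∀ p ∈ D k ∪ (D k).image Prod.swap,
      (lv p.1 = k ∧ lv p.2 = k+1) ∨ (lv p.1 = k+1 ∧ lv p.2 = k) := by
    intro k hk p hp
    rcases Finset.mem_union.mp hp with h | h
    · obtain ⟨h1, h2, _⟩ := hDmem k hk p h
      exact Or.inl ⟨h1, h2⟩
    · obtain ⟨q, hq, rfl⟩ := Finset.mem_image.mp h
      obtain ⟨h1, h2, _⟩ := hDmem k hk q hq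
      exact Or.inr ⟨h2, h1⟩
  have hdisjU : (↑(Finset.range (n-1)) : Set ℕ).PairwiseDisjoint
      (fun k => D k ∪ (D k).image Prod.swap) := by
    intro a ha b hb hab
    rw [Function.onFun, Finset.disjoint_left]
    intro p hpa hpb
    have h1 := hDlev a (by simpa using ha) p hpa
    have h2 := hDlev b (by simpa using hb) p hpb
    omega
  have hUD : ∀ k, k < n-1 → Disjoint (D k) ((D k).image Prod.swap) := by
    intro k hk
    rw [Finset.disjoint_left]
    intro p hp1 hp2
    obtain ⟨h1, h2, _⟩ := hDmem k hk p hp1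
    obtain ⟨q, hq, hqe⟩ := Finset.mem_image.mp hp2
    obtain ⟨h3, h4, _⟩ := hDmem k hk q hq
    rw [← hqe] at h1 h2
    simp only [Prod.fst_swap, Prod.snd_swap] at h1 h2
    omega
  have hswap_sum : ∀ k, ∑ p ∈ (D k).image Prod.swap, θ p.1 p.2 ^ 2
      = ∑ p ∈ D k, θ p.1 p.2 ^ 2 := by
    intro k
    rw [Finset.sum_image (fun p _ q _ h => Prod.swap_injective h)]
    exact Finset.sum_congr rfl (fun p _ => by
      simp only [Prod.fst_swap, Prod.snd_swap]
      rw [hanti p.2 p.1]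
      ring)
  have hUsum : ∑ p ∈ U, θ p.1 p.2 ^ 2
      = ∑ k ∈ Finset.range (n-1), 2 * ∑ p ∈ D k, θ p.1 p.2 ^ 2 := by
    rw [hU, Finset.sum_biUnion hdisjU]
    exact Finset.sum_congr rfl (fun k hk => by
      rw [Finset.sum_union (hUD k (Finset.mem_range.mp hk)), hswap_sum k]
      ring)
  have hle : ∑ p ∈ U, θ p.1 p.2 ^ 2
      ≤ ∑ p ∈ (Finset.univ : Finset ((Fin n × Fin n) × (Fin n × Fin n))), θ p.1 p.2 ^ 2 :=
    Finset.sum_le_sum_of_subset_of_nonneg (Finset.subset_univ U)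
      (fun p _ _ => sq_nonneg _)
  have hHr : Hr (n-1) ≤ ∑ p ∈ U, θ p.1 p.2 ^ 2 := by
    rw [hUsum, Hr]
    exact Finset.sum_le_sum (fun k hk => hCS k (Finset.mem_range.mp hk))
  have henergy : energy (fun _ _ => (1:ℝ)) θ
      = (1/2) * ∑ p ∈ (Finset.univ : Finset ((Fin n × Fin n) × (Fin n × Fin n))),
          θ p.1 p.2 ^ 2 := by
    rw [energy]
    simp only [mul_one]
    exact congrArg (fun z => (1/2 : ℝ) * z)
      (Fintype.sum_prod_type (f := fun p : (Fin n × Fin n) × (Fin n × Fin n) =>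
        θ p.1 p.2 ^ 2)).symm
  rw [henergy]
  linarith
end Lower

section Numeric

lemma Hr_eq_harmonic (m : ℕ) : Hr m = ((harmonic m : ℚ) : ℝ) := by
  rw [Hr, harmonic]
  push_cast
  rfl

lemma Hr_le_log (m : ℕ) : Hr m ≤ 1 + Real.log m := by
  rw [Hr_eq_harmonic]
  exact harmonic_le_one_add_log m

lemma log_le_Hr (m : ℕ) : Real.log ((m:ℝ)+1) ≤ Hr m := by
  rw [Hr_eq_harmonic]
  have := log_add_one_le_harmonic m
  push_cast at this ⊢
  exact this

lemma Hr_mono {a b : ℕ} (h : a ≤ b) : Hr a ≤ Hr b :=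
  Finset.sum_le_sum_of_subset_of_nonneg
    (Finset.range_subset_range.mpr h) (fun i _ _ => by positivity)

lemma log5_ge : (3:ℝ)/2 ≤ Real.log 5 := by
  rw [Real.le_log_iff_exp_le (by norm_num : (0:ℝ) < 5)]
  have h1 : Real.exp (3/2) ^ 2 = Real.exp 3 := by
    rw [sq, ← Real.exp_add]; norm_num
  have h2 : Real.exp 3 = Real.exp 1 ^ 3 := by
    rw [← Real.exp_nat_mul]; norm_num
  have h3 := Real.exp_one_lt_d9
  have h4 : Real.exp 3 < 25 := by
    rw [h2]
    have h5 : Real.exp 1 ^ 3 < 2.7182818286 ^ 3 :=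
      pow_lt_pow_left₀ h3 (le_of_lt (Real.exp_pos 1)) (by norm_num)
    nlinarith [h5]
  nlinarith [Real.exp_pos (3/2 : ℝ)]

lemma Hr1 : Hr 1 = 1 := by norm_num [Hr]
lemma Hr2 : Hr 2 = 3/2 := by rw [Hr]; simp [Finset.sum_range_succ]; norm_num
lemma Hr3 : Hr 3 = 11/6 := by rw [Hr]; simp [Finset.sum_range_succ]; norm_num
lemma Hr4 : Hr 4 = 25/12 := by rw [Hr]; simp [Finset.sum_range_succ]; norm_num

lemma upper_num (n : ℕ) (hn : 2 ≤ n) :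
    2 * ((1/6) * (2 * Hr (n-1) + 2 * Hr n - 1)) ≤ 2 * Real.log n := by
  have hlog2 := Real.log_two_gt_d9
  rcases (by omega : n = 2 ∨ n = 3 ∨ n = 4 ∨ 5 ≤ n) with h | h | h | h
  · subst h
    rw [show (2:ℕ)-1 = 1 by norm_num, Hr1, Hr2]
    norm_num
    linarith
  · subst h
    rw [show (3:ℕ)-1 = 2 by norm_num, Hr2, Hr3]
    have h9 : Real.log 9 = 2 * Real.log 3 := by
      rw [show (9:ℝ) = 3^2 by norm_num, Real.log_pow]; push_cast; ring
    have h8 : Real.log 8 = 3 * Real.log 2 := by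
      rw [show (8:ℝ) = 2^3 by norm_num, Real.log_pow]; push_cast; ring
    have h89 : Real.log 8 ≤ Real.log 9 := Real.log_le_log (by norm_num) (by norm_num)
    push_cast
    linarith
  · subst h
    rw [show (4:ℕ)-1 = 3 by norm_num, Hr3, Hr4]
    have h4 : Real.log 4 = 2 * Real.log 2 := by
      rw [show (4:ℝ) = 2^2 by norm_num, Real.log_pow]; push_cast; ring
    push_cast
    linarith
  · have hl5 : (3:ℝ)/2 ≤ Real.log n := by
      refine le_trans log5_ge (Real.log_le_log (by norm_num) ?_)
      exact_mod_cast h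
    have h1 : Hr n ≤ 1 + Real.log n := Hr_le_log n
    have h2 : Hr (n-1) ≤ Hr n := Hr_mono (by omega)
    linarith

end Numeric

/-- In the `n × n` square grid with unit conductances, the effective resistance between
opposite corners `a = (1,1)` and `z = (n,n)` satisfies
`log(n)/2 ≤ R(a ↔ z) ≤ 2 log(n)`. -/
theorem square_grid_corner_resistance (n : ℕ) (hn : 1 ≤ n) :
    Real.log n / 2 ≤
        effRes (SqGrid n) (fun _ _ => (1 : ℝ)) (⟨0, hn⟩, ⟨0, hn⟩)
          (⟨n - 1, by omega⟩, ⟨n - 1, by omega⟩) ∧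
      effRes (SqGrid n) (fun _ _ => (1 : ℝ)) (⟨0, hn⟩, ⟨0, hn⟩)
          (⟨n - 1, by omega⟩, ⟨n - 1, by omega⟩) ≤ 2 * Real.log n := by
  by_cases hn2 : 2 ≤ n
  · haveI : NeZero n := ⟨by omega⟩
    set s : Fin n × Fin n := (⟨0, hn⟩, ⟨0, hn⟩) with hsdef
    set t : Fin n × Fin n := (⟨n - 1, by omega⟩, ⟨n - 1, by omega⟩) with htdef
    have hs1 : s.1.val = 0 := rfl
    have hs2 : s.2.val = 0 := rfl
    have ht1 : t.1.val = n - 1 := rfl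
    have ht2 : t.2.val = n - 1 := rfl
    have hflow : IsUnitFlow (SqGrid n) s t (gflow n) := by
      refine ⟨gflow_anti, gflow_not_adj hn2, ?_, ?_⟩
      · intro x hxs hxt
        apply gflow_div hn2
        · rintro ⟨h1, h2⟩
          exact hxs (Prod.ext (Fin.val_injective (by rw [h1]))
            (Fin.val_injective (by rw [h2])))
        · rintro ⟨h1, h2⟩
          exact hxt (Prod.ext (Fin.val_injective (by rw [h1]))
            (Fin.val_injective (by rw [h2])))
      · exact gflow_strength hn2 s hs1 hs2
    have hmem : energy (fun _ _ => (1:ℝ)) (gflow n)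
        ∈ {E : ℝ | ∃ θ : (Fin n × Fin n) → (Fin n × Fin n) → ℝ,
            IsUnitFlow (SqGrid n) s t θ ∧ E = energy (fun _ _ => (1:ℝ)) θ} :=
      ⟨gflow n, hflow, rfl⟩
    have hbdd : BddBelow {E : ℝ | ∃ θ : (Fin n × Fin n) → (Fin n × Fin n) → ℝ,
        IsUnitFlow (SqGrid n) s t θ ∧ E = energy (fun _ _ => (1:ℝ)) θ} := by
      refine ⟨0, ?_⟩
      rintro E ⟨θ, _, rfl⟩
      rw [energy]
      have : ∀ x : Fin n × Fin n, (0:ℝ) ≤ ∑ y, θ x y ^ 2 * 1 :=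
        fun x => Finset.sum_nonneg (fun y _ => by positivity)
      have h2 : (0:ℝ) ≤ ∑ x : Fin n × Fin n, ∑ y, θ x y ^ 2 * 1 :=
        Finset.sum_nonneg (fun x _ => this x)
      linarith
    have hcastn : ((n - 1 : ℕ) : ℝ) + 1 = (n:ℝ) := by
      push_cast [Nat.cast_sub (by omega : 1 ≤ n)]
      ring
    constructor
    · rw [effRes]
      apply le_csInf ⟨_, hmem⟩
      rintro E ⟨θ, hθ, rfl⟩
      have hlow := energy_lower hn2 s t hs1 hs2 ht1 ht2 θ hθ
      have hlog : Real.log n ≤ Hr (n-1) := by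
        have := log_le_Hr (n-1)
        rwa [hcastn] at this
      linarith
    · rw [effRes]
      refine le_trans (csInf_le hbdd hmem) ?_
      rw [energy_gflow hn2]
      have h1 := sigma_le n hn2
      have h2 := upper_num n hn2
      linarith
  · have hn1 : n = 1 := by omega
    subst hn1
    have hempty : {E : ℝ | ∃ θ : (Fin 1 × Fin 1) → (Fin 1 × Fin 1) → ℝ,
        IsUnitFlow (SqGrid 1) (⟨0, hn⟩, ⟨0, hn⟩)
          (⟨1 - 1, by omega⟩, ⟨1 - 1, by omega⟩) θ
        ∧ E = energy (fun _ _ => (1:ℝ)) θ} = ∅ := by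
      ext E
      simp only [Set.mem_setOf_eq, Set.mem_empty_iff_false, iff_false, not_exists]
      rintro θ ⟨⟨hanti, _, _, hstr⟩, _⟩
      set s : Fin 1 × Fin 1 := (⟨0, hn⟩, ⟨0, hn⟩)
      have h0 : θ s s = 0 := by have := hanti s s; linarith
      have hs1v : s.1.val = 0 := rfl
      have hs2v : s.2.val = 0 := rfl
      have hys : ∀ y : Fin 1 × Fin 1, y = s := by
        intro y
        have h1 := y.1.isLt
        have h2 := y.2.isLt
        exact Prod.ext (Fin.val_injective (by omega)) (Fin.val_injective (by omega))
      have huniv : ∑ y, θ s y = θ s s :=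
        Finset.sum_eq_single_of_mem s (Finset.mem_univ s) (fun y _ hy => absurd (hys y) hy)
      rw [huniv, h0] at hstr
      norm_num at hstr
    rw [effRes, hempty, Real.sInf_empty]
    norm_num
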